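/- For the anchor ring of radii a > r > 0, there exists no matrix Λ ∈ ℝ^{3×3} such that Δn = Λn holds identically, where n is the Gauss map and Δ the Laplace–Beltrami operator of the first fundamental form. -/

import Mathlib

private lemma idphi (t φ : ℝ) : iteratedDeriv 2 (fun _ : ℝ => -Real.sin t) φ = 0 := by
  rw [iteratedDeriv_succ, iteratedDeriv_one]; simp

private lemma dsin (t : ℝ) : deriv (fun s => -Real.sin s) t = -Real.cos t := by simp

private lemma idt (t : ℝ) : iteratedDeriv 2 (fun s => -Real.sin s) t = Real.sin t := by
  rw [iteratedDeriv_succ, iteratedDeriv_one]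
  have : deriv (fun s => -Real.sin s) = fun s => -Real.cos s := by funext s; simp
  rw [this]; simp

/-- For the anchor ring of radii `a > r > 0`, with Gauss map
`n(t,φ) = (-cos t cos φ, -cos t sin φ, -sin t)` and Laplace operator
`Δ = -(1/γ²)∂²/∂φ² + (sin t)/(rγ) ∂/∂t - (1/r²)∂²/∂t²` (`γ = a + r cos t`),
there exists no matrix `Λ ∈ ℝ^{3×3}` with `Δn = Λn` identically. -/
theorem anchor_ring_not_coordinate_finite_type (a r : ℝ) (hr : 0 < r) (har : r < a)
    (n : Fin 3 → ℝ → ℝ → ℝ)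
    (hn : n = ![fun t φ => -Real.cos t * Real.cos φ,
                fun t φ => -Real.cos t * Real.sin φ,
                fun t _ => -Real.sin t]) :
    ¬ ∃ Λ : Matrix (Fin 3) (Fin 3) ℝ, ∀ (i : Fin 3) (t φ : ℝ),
      -(1 / (a + r * Real.cos t) ^ 2) * iteratedDeriv 2 (fun ψ => n i t ψ) φ
        + (Real.sin t / (r * (a + r * Real.cos t))) * deriv (fun s => n i s φ) t
        - (1 / r ^ 2) * iteratedDeriv 2 (fun s => n i s φ) t
      = ∑ j, Λ i j * n j t φ := by
  rintro ⟨Λ, h⟩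
  have key : ∀ t φ : ℝ,
      (Real.sin t / (r * (a + r * Real.cos t))) * (-Real.cos t)
        - (1 / r ^ 2) * Real.sin t
      = Λ 2 0 * (-Real.cos t * Real.cos φ) + Λ 2 1 * (-Real.cos t * Real.sin φ)
        + Λ 2 2 * (-Real.sin t) := by
    intro t φ
    have H := h 2 t φ
    rw [hn] at H
    simp only [Matrix.cons_val_two, Matrix.tail_cons, Matrix.head_cons, Matrix.cons_val_zero,
      Matrix.cons_val_one, Fin.sum_univ_three] at H
    rw [idphi, dsin, idt] at H
    linarith [H]
  have h0 : Λ 2 0 = 0 := by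
    have := key 0 0
    simp at this
    linarith
  have h2 : Λ 2 2 = 1 / r ^ 2 := by
    have := key (Real.pi / 2) 0
    simp [Real.sin_pi_div_two, Real.cos_pi_div_two] at this
    have hr2 : (r : ℝ) ^ 2 ≠ 0 := by positivity
    field_simp at this ⊢
    linarith
  have := key (Real.pi / 3) 0
  rw [h0, h2, Real.sin_pi_div_three, Real.cos_pi_div_three] at this
  have hs3 : (0 : ℝ) < Real.sqrt 3 := by positivity
  have hg : (0 : ℝ) < r * (a + r * (1 / 2)) := by nlinarith
  have hr2 : (0:ℝ) < r ^ 2 := by positivity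
  have hne : r * (a + r * (1 / 2)) ≠ 0 := ne_of_gt hg
  field_simp at this
  simp only [Real.sin_zero, Real.cos_zero] at this
  nlinarith [this, mul_pos hs3 hg, sq_nonneg (Real.sqrt 3), mul_pos hs3 (div_pos hr (by linarith : (0:ℝ) < 2 * a + r))]
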